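/- In Set, suppose given a commuting cube whose top face (A' → B', A' → C', B' → D', C' → D') is a pushout with m' : A' → C' injective, whose left face and bottom face are pullbacks, and whose bottom-right vertical-adjacent arrow n : B → D is an injection. Then the right face of the cube (the square B' → D', B' → B, D' → D, B → D) is a pullback. -/

import Mathlib

open CategoryTheory CategoryTheory.Limits

universe u

/-- In a pullback square of types, every compatible pair comes from the vertex. -/
lemma exists_of_isPullback_types {P X Y Z : Type u} {fst : P ⟶ X} {snd : P ⟶ Y}
    {f : X ⟶ Z} {g : Y ⟶ Z} (h : IsPullback fst snd f g) (x : X) (y : Y)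
    (hxy : f x = g y) : ∃ p : P, fst p = x ∧ snd p = y := by
  let s : PullbackCone f g := PullbackCone.mk (W := PUnit.{u+1})
    (TypeCat.ofHom fun _ => x) (TypeCat.ofHom fun _ => y) (ConcreteCategory.hom_ext _ _ fun _ => hxy)
  refine ⟨h.isLimit.lift s PUnit.unit, ?_, ?_⟩
  · exact ConcreteCategory.congr_hom (h.isLimit.fac s (.left)) PUnit.unit
  · exact ConcreteCategory.congr_hom (h.isLimit.fac s (.right)) PUnit.unit

/-- In `Set`: given a commuting cube whose top face is a pushout with `m'` injective,
whose left and bottom faces are pullbacks, and whose arrow `n : B → D` is injective,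
the right face of the cube is a pullback. -/
theorem cube_right_face_pullback {A' B' C' D' A B C D : Type u}
    (f' : A' ⟶ B') (m' : A' ⟶ C') (n' : B' ⟶ D') (g' : C' ⟶ D')
    (f : A ⟶ B) (m : A ⟶ C) (n : B ⟶ D) (g : C ⟶ D)
    (a : A' ⟶ A) (b : B' ⟶ B) (c : C' ⟶ C) (d : D' ⟶ D)
    (hback : f' ≫ b = a ≫ f) (hright : n' ≫ d = b ≫ n) (hfront : g' ≫ d = c ≫ g)
    (htop : IsPushout f' m' n' g') (hm' : Function.Injective m')
    (hleft : IsPullback m' a c m) (hbot : IsPullback f m n g)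
    (hn : Function.Injective n) :
    IsPullback n' b d n := by
  have hmono : Mono m' := (mono_iff_injective m').2 hm'
  have hn'mono : Mono n' := Adhesive.mono_of_isPushout_of_mono_right htop
  have hn' : Function.Injective n' := (mono_iff_injective n').1 hn'mono
  -- key existence and uniqueness
  have key : ∀ (y' : D') (x : B), d y' = n x → ∃! z : B', n' z = y' ∧ b z = x := by
    intro y' x hxy
    have hex : ∃ z : B', n' z = y' ∧ b z = x := by
      obtain ⟨j, t, ht⟩ := Types.jointly_surjective_of_isColimit htop.isColimit y'
      have hcase : (∃ z : B', n' z = y') ∨ (∃ w : C', g' w = y') := by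
        cases j with
        | none => exact Or.inl ⟨f' t, ht⟩
        | some j =>
          cases j with
          | left => exact Or.inl ⟨t, ht⟩
          | right => exact Or.inr ⟨t, ht⟩
      rcases hcase with ⟨z, rfl⟩ | ⟨w, rfl⟩
      · refine ⟨z, rfl, hn ?_⟩
        have := ConcreteCategory.congr_hom hright z
        simp only [types_comp_apply] at this
        rw [← this, hxy]
      · -- y' = g' w, so g (c w) = n x
        have hgc : n x = g (c w) := by
          have := ConcreteCategory.congr_hom hfront w
          simp only [types_comp_apply] at this
          rw [← hxy, this]
        obtain ⟨a0, hfa0, hma0⟩ := exists_of_isPullback_types hbot x (c w) hgc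
        obtain ⟨a', hma', haa'⟩ := exists_of_isPullback_types hleft w a0
          (by rw [hma0])
        refine ⟨f' a', ?_, ?_⟩
        · have := ConcreteCategory.congr_hom htop.w a'
          simp only [types_comp_apply] at this
          rw [this, hma']
        · have := ConcreteCategory.congr_hom hback a'
          simp only [types_comp_apply] at this
          rw [this, haa', hfa0]
    obtain ⟨z, hz⟩ := hex
    exact ⟨z, hz, fun z' hz' => hn' (hz'.1.trans hz.1.symm)⟩
  refine IsPullback.of_isLimit (PullbackCone.IsLimit.mk hright
    (fun s => TypeCat.ofHom fun x => (key (s.fst x) (s.snd x) (ConcreteCategory.congr_hom s.condition x)).choose)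
    (fun s => ConcreteCategory.hom_ext _ _ fun x =>
      (key (s.fst x) (s.snd x) (ConcreteCategory.congr_hom s.condition x)).choose_spec.1.1)
    (fun s => ConcreteCategory.hom_ext _ _ fun x =>
      (key (s.fst x) (s.snd x) (ConcreteCategory.congr_hom s.condition x)).choose_spec.1.2)
    (fun s l h1 h2 => ConcreteCategory.hom_ext _ _ fun x => ?_))
  exact ((key (s.fst x) (s.snd x) (ConcreteCategory.congr_hom s.condition x)).choose_spec.2 (l x)
    ⟨ConcreteCategory.congr_hom h1 x, ConcreteCategory.congr_hom h2 x⟩).symm.symm ▸ rfl
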